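/- The map ξ ↦ (ρ, θ⁰, θ¹, θ²) constructed from the paper's formulas is two-to-one: two spinors ξ, ξ' ∈ ℂ² satisfying |ξ¹|²−|ξ²|² > 0 yield the same density ρ and the same coframe (θ⁰, θ¹, θ²) if and only if ξ' = ξ or ξ' = −ξ. -/
import Mathlib


open Complex

/-- The density `ρ = |ξ¹|² - |ξ²|²` of a spinor. -/
noncomputable def spinDensity (ξ1 ξ2 : ℂ) : ℝ := Complex.normSq ξ1 - Complex.normSq ξ2

/-- The covector `θ⁰_α = ρ⁻¹ ξ̄^ȧ σ_{αȧb} ξ^b`. -/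
noncomputable def theta0 (ξ1 ξ2 : ℂ) : Fin 3 → ℝ :=
  ![(spinDensity ξ1 ξ2)⁻¹ * (Complex.normSq ξ1 + Complex.normSq ξ2),
    (spinDensity ξ1 ξ2)⁻¹ * (2 * (starRingEnd ℂ ξ1 * ξ2).re),
    (spinDensity ξ1 ξ2)⁻¹ * (2 * (starRingEnd ℂ ξ1 * ξ2).im)]

/-- The complex covector `(θ¹ + iθ²)_α`. -/
noncomputable def theta12 (ξ1 ξ2 : ℂ) : Fin 3 → ℂ :=
  ![((spinDensity ξ1 ξ2 : ℝ) : ℂ)⁻¹ * (2 * ξ1 * ξ2),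
    ((spinDensity ξ1 ξ2 : ℝ) : ℂ)⁻¹ * (ξ1 ^ 2 + ξ2 ^ 2),
    ((spinDensity ξ1 ξ2 : ℝ) : ℂ)⁻¹ * (I * (ξ2 ^ 2 - ξ1 ^ 2))]

/-- `θ¹` is the real part of `θ¹ + iθ²`. -/
noncomputable def theta1 (ξ1 ξ2 : ℂ) : Fin 3 → ℝ := fun α => (theta12 ξ1 ξ2 α).re

/-- `θ²` is the imaginary part of `θ¹ + iθ²`. -/
noncomputable def theta2 (ξ1 ξ2 : ℂ) : Fin 3 → ℝ := fun α => (theta12 ξ1 ξ2 α).im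

/-- The Lorentzian dot product `P·Q = -P₀Q₀ + P₁Q₁ + P₂Q₂`. -/
def ldot (P Q : Fin 3 → ℝ) : ℝ := -(P 0 * Q 0) + P 1 * Q 1 + P 2 * Q 2


/-- The map from spinors to (density, coframe) data is exactly two-to-one:
`ξ` and `ξ'` (both with positive density) produce the same data iff `ξ' = ±ξ`. -/
theorem stmt11 (ξ1 ξ2 ξ1' ξ2' : ℂ)
    (hρ : 0 < spinDensity ξ1 ξ2) (hρ' : 0 < spinDensity ξ1' ξ2') :
    (spinDensity ξ1' ξ2' = spinDensity ξ1 ξ2 ∧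
      theta0 ξ1' ξ2' = theta0 ξ1 ξ2 ∧
      theta1 ξ1' ξ2' = theta1 ξ1 ξ2 ∧
      theta2 ξ1' ξ2' = theta2 ξ1 ξ2)
    ↔ ((ξ1' = ξ1 ∧ ξ2' = ξ2) ∨ (ξ1' = -ξ1 ∧ ξ2' = -ξ2)) := by
  constructor
  · rintro ⟨hρeq, h0, h1, h2⟩
    have hne : (spinDensity ξ1 ξ2 : ℝ) ≠ 0 := ne_of_gt hρ
    have hneC : ((spinDensity ξ1 ξ2 : ℝ) : ℂ) ≠ 0 := by exact_mod_cast hne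
    have hinv : (((spinDensity ξ1 ξ2 : ℝ) : ℂ))⁻¹ ≠ 0 := inv_ne_zero hneC
    have hξ1 : ξ1 ≠ 0 := by
      intro h
      rw [spinDensity, h] at hρ
      simp at hρ
      have := Complex.normSq_nonneg ξ2
      linarith
    have h12 : ∀ α, theta12 ξ1' ξ2' α = theta12 ξ1 ξ2 α := by
      intro α
      exact Complex.ext (congrFun h1 α) (congrFun h2 α)
    have e0 := h12 0
    have e1 := h12 1
    have e2 := h12 2
    simp only [theta12, hρeq, Matrix.cons_val_zero, Matrix.cons_val_one, Matrix.head_cons,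
      Matrix.cons_val_two, Matrix.tail_cons] at e0 e1 e2
    have c0 : ξ1' * ξ2' = ξ1 * ξ2 := by
      have := mul_left_cancel₀ hinv e0
      linear_combination this / 2
    have c1 : ξ1' ^ 2 + ξ2' ^ 2 = ξ1 ^ 2 + ξ2 ^ 2 := mul_left_cancel₀ hinv e1
    have c2 : ξ2' ^ 2 - ξ1' ^ 2 = ξ2 ^ 2 - ξ1 ^ 2 := by
      have := mul_left_cancel₀ hinv e2
      exact mul_left_cancel₀ Complex.I_ne_zero this
    have hsq1 : ξ1' ^ 2 = ξ1 ^ 2 := by linear_combination (c1 - c2) / 2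
    have hcase : ξ1' = ξ1 ∨ ξ1' = -ξ1 := by
      rcases mul_eq_zero.mp (show (ξ1' - ξ1) * (ξ1' + ξ1) = 0 by linear_combination hsq1) with h | h
      · exact Or.inl (sub_eq_zero.mp h)
      · exact Or.inr (eq_neg_of_add_eq_zero_left h)
    rcases hcase with h | h
    · left
      refine ⟨h, mul_left_cancel₀ hξ1 ?_⟩
      rw [h] at c0; exact c0
    · right
      refine ⟨h, mul_left_cancel₀ hξ1 ?_⟩
      rw [h] at c0; linear_combination -c0
  · rintro (⟨ha, hb⟩ | ⟨ha, hb⟩) <;> subst ha <;> subst hb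
    · exact ⟨rfl, rfl, rfl, rfl⟩
    · have hd : spinDensity (-ξ1) (-ξ2) = spinDensity ξ1 ξ2 := by
        simp [spinDensity]
      have ht : theta12 (-ξ1) (-ξ2) = theta12 ξ1 ξ2 := by
        funext α
        fin_cases α <;> simp [theta12, hd]
      refine ⟨hd, ?_, ?_, ?_⟩
      · funext α
        fin_cases α <;> simp [theta0, hd, map_neg]
      · unfold theta1; rw [ht]
      · unfold theta2; rw [ht]
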